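/- Let R be a commutative ring with identity that is not an integral domain. If the compressed zero-divisor graph Γ_E(R) contains a cycle, then it contains a cycle of length 3; in other words, the girth of Γ_E(R) is either 3 or infinite. -/

import Mathlib

open SimpleGraph

/-- `Zstar R` is the set of nonzero zero-divisors of the commutative ring `R`. -/
def Zstar (R : Type*) [CommRing R] : Set R :=
  {x : R | x ≠ 0 ∧ ∃ y : R, y ≠ 0 ∧ x * y = 0}

/-- `annSet R x` is the annihilator of `x`, i.e. `{y : R | x * y = 0}`. -/
def annSet (R : Type*) [CommRing R] (x : R) : Set R :=
  {y : R | x * y = 0}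

/-- Two nonzero zero-divisors are equivalent iff they have the same annihilator. -/
instance zdvSetoid (R : Type*) [CommRing R] : Setoid (Zstar R) :=
  ⟨fun a b => annSet R a.1 = annSet R b.1, ⟨fun _ => rfl, Eq.symm, Eq.trans⟩⟩

/-- The vertices of the compressed zero-divisor graph `Γ_E(R)`: equivalence
classes `[x]` of nonzero zero-divisors under equality of annihilators. -/
abbrev CZDVertex (R : Type*) [CommRing R] : Type _ :=
  Quotient (zdvSetoid R)

/-- The compressed zero-divisor graph `Γ_E(R)`: distinct classes `[x]` and `[y]`
are adjacent iff `x * y = 0` (which is independent of the chosen representatives). -/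
def CZDG (R : Type*) [CommRing R] : SimpleGraph (CZDVertex R) where
  Adj u v := u ≠ v ∧ ∃ a b : Zstar R,
    (⟦a⟧ : CZDVertex R) = u ∧ (⟦b⟧ : CZDVertex R) = v ∧ (a : R) * b = 0
  symm := by
    constructor
    rintro u v ⟨huv, a, b, ha, hb, hab⟩
    exact ⟨huv.symm, b, a, hb, ha, by rwa [mul_comm]⟩
  loopless := by
    constructor
    rintro u ⟨h, -⟩
    exact h rfl

/-- A set `W` of vertices is resolving if any two distinct vertices have
different distance to some vertex of `W`. -/
def IsResolving {V : Type*} (G : SimpleGraph V) (W : Set V) : Prop :=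
  ∀ u v : V, u ≠ v → ∃ w ∈ W, G.dist u w ≠ G.dist v w

/-- A set `W` of vertices is dominating if every vertex outside `W` is adjacent
to some vertex of `W`. -/
def IsDominating {V : Type*} (G : SimpleGraph V) (W : Set V) : Prop :=
  ∀ v : V, v ∉ W → ∃ w ∈ W, G.Adj v w

/-- The dominant metric dimension `Ddim G`: the minimum cardinality of a set of
vertices that is simultaneously resolving and dominating, with the convention
that it is `0` for a graph with exactly one vertex. -/
noncomputable def Ddim {V : Type*} (G : SimpleGraph V) : ℕ∞ :=
  if Nat.card V = 1 then 0
  else sInf {n : ℕ∞ | ∃ W : Set V, IsResolving G W ∧ IsDominating G W ∧ W.encard = n}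


section Auxiliary

open SimpleGraph

lemma support_getElem' {V : Type*} {G : SimpleGraph V} {u v : V} (p : G.Walk u v) :
    ∀ (i : ℕ) (hi : i < p.support.length), p.support[i] = p.getVert i := by
  induction p with
  | nil =>
    intro i hi
    simp only [Walk.support_nil, List.length_cons, List.length_nil] at hi
    interval_cases i
    rfl
  | cons h q ih =>
    intro i hi
    cases i with
    | zero => rfl
    | succ i =>
      simp only [Walk.support_cons, List.length_cons] at hi
      have : (Walk.cons h q).support[i+1]'(by simpa using hi) = q.support[i]'(by omega) := by
        simp [Walk.support_cons]
      refine this.trans ((ih i (by omega)).trans ?_)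
      rfl

lemma cycle_getVert_inj {V : Type*} {G : SimpleGraph V} {v : V} {p : G.Walk v v}
    (hp : p.IsCycle) {i j : ℕ} (hi1 : 1 ≤ i) (hi2 : i ≤ p.length) (hj1 : 1 ≤ j)
    (hj2 : j ≤ p.length) (hij : p.getVert i = p.getVert j) : i = j := by
  obtain ⟨i, rfl⟩ : ∃ i', i = i' + 1 := ⟨i - 1, by omega⟩
  obtain ⟨j, rfl⟩ : ∃ j', j = j' + 1 := ⟨j - 1, by omega⟩
  have hlen : p.support.length = p.length + 1 := p.length_support
  have htl : p.support.tail.length = p.length := by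
    rw [List.length_tail, hlen]; omega
  have hi' : i < p.support.tail.length := by omega
  have hj' : j < p.support.tail.length := by omega
  have e1 : p.support.tail[i] = p.getVert (i + 1) := by
    rw [List.getElem_tail, support_getElem']
  have e2 : p.support.tail[j] = p.getVert (j + 1) := by
    rw [List.getElem_tail, support_getElem']
  have := (hp.support_nodup.getElem_inj_iff (hi := hi') (hj := hj')).mp
    (by rw [e1, e2, hij])
  omega

variable {R : Type*} [CommRing R]

lemma quot_eq_iff (a b : Zstar R) :
    (⟦a⟧ : CZDVertex R) = ⟦b⟧ ↔ annSet R a.1 = annSet R b.1 := by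
  rw [Quotient.eq]
  exact Iff.rfl

lemma ann_out_ne {u v : CZDVertex R} (h : u ≠ v) :
    annSet R (u.out : R) ≠ annSet R (v.out : R) := by
  intro he
  exact h (by rw [← u.out_eq, ← v.out_eq, quot_eq_iff]; exact he)

lemma mem_ann {x y : R} : y ∈ annSet R x ↔ x * y = 0 := Iff.rfl

lemma zc {x y : R} (h : x * y = 0) : y * x = 0 := by rwa [mul_comm]

lemma nzc {x y : R} (h : x * y ≠ 0) : y * x ≠ 0 := fun h2 => h (zc h2)

lemma adj_out {u v : CZDVertex R} (h : (CZDG R).Adj u v) :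
    (u.out : R) * (v.out : R) = 0 := by
  obtain ⟨hne, a, b, ha, hb, hab⟩ := h
  have h1 : annSet R (a : R) = annSet R (u.out : R) := by
    rw [← quot_eq_iff]; rw [ha, u.out_eq]
  have h2 : annSet R (b : R) = annSet R (v.out : R) := by
    rw [← quot_eq_iff]; rw [hb, v.out_eq]
  have hb1 : (u.out : R) * (b : R) = 0 := by
    rw [← mem_ann, ← h1, mem_ann]; exact hab
  have hb2 : (b : R) * (u.out : R) = 0 := zc hb1
  have := (mem_ann.mpr hb2 : (u.out : R) ∈ annSet R (b : R))
  rw [h2, mem_ann] at this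
  exact zc this

lemma tri_egirth {x y z : R} (hx0 : x ≠ 0) (hy0 : y ≠ 0) (hz0 : z ≠ 0)
    (hxy : x * y = 0) (hyz : y * z = 0) (hxz : x * z = 0)
    (nxy : annSet R x ≠ annSet R y) (nyz : annSet R y ≠ annSet R z)
    (nxz : annSet R x ≠ annSet R z) : (CZDG R).egirth ≤ 3 := by
  have hxZ : x ∈ Zstar R := ⟨hx0, y, hy0, hxy⟩
  have hyZ : y ∈ Zstar R := ⟨hy0, z, hz0, hyz⟩
  have hzZ : z ∈ Zstar R := ⟨hz0, x, hx0, by rwa [mul_comm]⟩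
  set u : CZDVertex R := ⟦⟨x, hxZ⟩⟧ with hu
  set v : CZDVertex R := ⟦⟨y, hyZ⟩⟧ with hv
  set w : CZDVertex R := ⟦⟨z, hzZ⟩⟧ with hw
  have huv : u ≠ v := fun h => nxy ((quot_eq_iff _ _).mp h)
  have hvw : v ≠ w := fun h => nyz ((quot_eq_iff _ _).mp h)
  have huw : u ≠ w := fun h => nxz ((quot_eq_iff _ _).mp h)
  have auv : (CZDG R).Adj u v := ⟨huv, ⟨x, hxZ⟩, ⟨y, hyZ⟩, rfl, rfl, hxy⟩
  have avw : (CZDG R).Adj v w := ⟨hvw, ⟨y, hyZ⟩, ⟨z, hzZ⟩, rfl, rfl, hyz⟩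
  have awu : (CZDG R).Adj w u := ⟨huw.symm, ⟨z, hzZ⟩, ⟨x, hxZ⟩, rfl, rfl, by rwa [mul_comm]⟩
  let p : (CZDG R).Walk u u := Walk.cons auv (Walk.cons avw (Walk.cons awu Walk.nil))
  have e12 : s(u,v) ≠ s(v,w) := by
    intro h; rw [Sym2.eq_iff] at h; rcases h with ⟨h1, h2⟩ | ⟨h1, h2⟩
    · exact huv h1
    · exact huw h1
  have e13 : s(u,v) ≠ s(w,u) := by
    intro h; rw [Sym2.eq_iff] at h; rcases h with ⟨h1, h2⟩ | ⟨h1, h2⟩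
    · exact huw h1
    · exact hvw h2
  have e23 : s(v,w) ≠ s(w,u) := by
    intro h; rw [Sym2.eq_iff] at h; rcases h with ⟨h1, h2⟩ | ⟨h1, h2⟩
    · exact hvw h1
    · exact huv h1.symm
  have hc : p.IsCycle := by
    rw [Walk.isCycle_def]
    refine ⟨⟨?_⟩, by simp [p], ?_⟩
    · simp only [p, Walk.edges_cons, Walk.edges_nil, List.nodup_cons, List.mem_cons,
        List.mem_singleton, List.not_mem_nil, or_false, List.nodup_nil, and_true]
      exact ⟨not_or.mpr ⟨e12, e13⟩, e23, not_false⟩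
    · simp only [p, Walk.support_cons, Walk.support_nil, List.tail_cons, List.nodup_cons,
        List.mem_cons, List.mem_singleton, List.not_mem_nil, or_false, List.nodup_nil, and_true]
      exact ⟨not_or.mpr ⟨hvw, fun h => huv h.symm⟩, (fun h => huw h.symm), not_false⟩
  have hle : (CZDG R).egirth ≤ (p.length : ℕ∞) := by
    rw [egirth]
    exact le_trans (iInf_le _ u) (le_trans (iInf_le _ p) (iInf_le _ hc))
  have hl3 : p.length = 3 := rfl
  rw [hl3] at hle
  exact le_trans hle (by norm_num)

/-- A "no triangle" hypothesis. -/
def NoTri (R : Type*) [CommRing R] : Prop :=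
  ∀ x y z : R, x ≠ 0 → y ≠ 0 → z ≠ 0 → x * y = 0 → y * z = 0 → x * z = 0 →
    annSet R x ≠ annSet R y → annSet R y ≠ annSet R z → annSet R x ≠ annSet R z → False

lemma helper (tri : NoTri R) (a b c d t : R) (ha : a ≠ 0) (hb : b ≠ 0) (hc : c ≠ 0)
    (hab : a * b = 0) (hbc : b * c = 0) (hcd : c * d = 0) (hda : d * a = 0)
    (nab : annSet R a ≠ annSet R b) (nbc : annSet R b ≠ annSet R c)
    (nac : annSet R a ≠ annSet R c) (ht : t * b = 0) (htd : t * d ≠ 0) : b * b = 0 := by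
  set m := t * d with hm
  have hma : m * a = 0 := by rw [hm]; linear_combination t * hda
  have hmb : m * b = 0 := by rw [hm]; linear_combination d * ht
  have hmc : m * c = 0 := by rw [hm]; linear_combination t * hcd
  by_cases hmb' : annSet R m = annSet R b
  · have : b ∈ annSet R m := mem_ann.mpr hmb
    rw [hmb'] at this
    exact mem_ann.mp this
  · exfalso
    by_cases hma' : annSet R m = annSet R a
    · by_cases hmc' : annSet R m = annSet R c
      · exact nac (hma' ▸ hmc')
      · exact tri m b c htd hb hc hmb hbc hmc hmb' nbc hmc'
    · exact tri m a b htd ha hb hma hab hmb hma' nab hmb'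

lemma final (tri : NoTri R) (x y x' y' : R) (hx : x ≠ 0) (hy : y ≠ 0)
    (hxy : x * y = 0) (hxy' : x * y' = 0) (hx'y : x' * y = 0)
    (hxx' : x * x' ≠ 0) (hyy' : y * y' ≠ 0) (nxy : annSet R x ≠ annSet R y)
    (hx2 : x * x = 0) (hy2 : y * y = 0) : False := by
  set e := x + y with he
  have he0 : e ≠ 0 := by
    intro h
    apply nxy
    have hy' : y = -x := by linear_combination h
    ext z
    simp only [mem_ann, hy', neg_mul, neg_eq_zero]
  have hex : e * x = 0 := by rw [he]; linear_combination hx2 + hxy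
  have hey : e * y = 0 := by rw [he]; linear_combination hxy + hy2
  have nex : annSet R e ≠ annSet R x := by
    intro h
    have : y' ∈ annSet R x := mem_ann.mpr hxy'
    rw [← h] at this
    have h2 : e * y' = 0 := mem_ann.mp this
    apply hyy'
    rw [he] at h2
    linear_combination h2 - hxy'
  have ney : annSet R e ≠ annSet R y := by
    intro h
    have : x' ∈ annSet R y := mem_ann.mpr (by linear_combination hx'y : y * x' = 0)
    rw [← h] at this
    have h2 : e * x' = 0 := mem_ann.mp this
    apply hxx'
    rw [he] at h2
    linear_combination h2 - hx'y
  exact tri e x y he0 hx hy hex hxy hey nex nxy ney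

lemma four_cycle (tri : NoTri R) (a b c d : R) (ha : a ≠ 0) (hb : b ≠ 0) (hc : c ≠ 0)
    (hd : d ≠ 0) (hab : a * b = 0) (hbc : b * c = 0) (hcd : c * d = 0) (hda : d * a = 0)
    (nab : annSet R a ≠ annSet R b) (nbc : annSet R b ≠ annSet R c)
    (ncd : annSet R c ≠ annSet R d) (nda : annSet R d ≠ annSet R a)
    (nac : annSet R a ≠ annSet R c) (nbd : annSet R b ≠ annSet R d) : False := by
  have hac0 : a * c ≠ 0 := fun h => tri a b c ha hb hc hab hbc h nab nbc nac
  have hbd0 : b * d ≠ 0 := fun h => tri b c d hb hc hd hbc hcd h nbc ncd nbd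
  have hbd2 : b * b = 0 ∨ d * d = 0 := by
    have hex : ∃ t : R, ¬(t ∈ annSet R b ↔ t ∈ annSet R d) := by
      by_contra hcon
      push_neg at hcon
      exact nbd (Set.ext fun t => hcon t)
    obtain ⟨t, ht⟩ := hex
    rw [mem_ann, mem_ann] at ht
    by_cases h1 : b * t = 0
    · have h2 : d * t ≠ 0 := fun h => ht (iff_of_true h1 h)
      exact Or.inl (helper tri a b c d t ha hb hc hab hbc hcd hda nab nbc nac (zc h1) (nzc h2))
    · have h2 : d * t = 0 := by
        by_contra h2
        exact ht (iff_of_false h1 h2)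
      exact Or.inr (helper tri a d c b t ha hd hc (zc hda) (zc hcd) (zc hbc) (zc hab)
        (fun h => nda h.symm) (fun h => ncd h.symm) nac (zc h2) (nzc h1))
  have hac2 : a * a = 0 ∨ c * c = 0 := by
    have hex : ∃ t : R, ¬(t ∈ annSet R a ↔ t ∈ annSet R c) := by
      by_contra hcon
      push_neg at hcon
      exact nac (Set.ext fun t => hcon t)
    obtain ⟨t, ht⟩ := hex
    rw [mem_ann, mem_ann] at ht
    by_cases h1 : a * t = 0
    · have h2 : c * t ≠ 0 := fun h => ht (iff_of_true h1 h)
      exact Or.inl (helper tri b a d c t hb ha hd (zc hab) (zc hda) (zc hcd) (zc hbc)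
        (fun h => nab h.symm) (fun h => nda h.symm) nbd (zc h1) (nzc h2))
    · have h2 : c * t = 0 := by
        by_contra h2
        exact ht (iff_of_false h1 h2)
      exact Or.inr (helper tri b c d a t hb hc hd hbc hcd hda hab nbc ncd nbd (zc h2) (nzc h1))
  rcases hac2 with ha2 | hc2 <;> rcases hbd2 with hb2 | hd2
  · exact final tri a b c d ha hb hab (zc hda) (zc hbc) hac0 hbd0 nab ha2 hb2
  · exact final tri a d c b ha hd (zc hda) hab hcd hac0 (nzc hbd0) (fun h => nda h.symm) ha2 hd2
  · exact final tri c b a d hc hb (zc hbc) hcd hab (nzc hac0) hbd0 (fun h => nbc h.symm) hc2 hb2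
  · exact final tri c d a b hc hd hcd (zc hbc) (zc hda) (nzc hac0) (nzc hbd0) ncd hc2 hd2

end Auxiliary

/-- If `R` is a commutative ring that is not an integral domain
and `Γ_E(R)` contains a cycle, then it contains a triangle: the girth of
`Γ_E(R)` is either `3` or infinite. -/
theorem stmt_19 (R : Type*) [CommRing R] (hd : ¬IsDomain R) :
    (CZDG R).egirth = 3 ∨ (CZDG R).egirth = ⊤ := by
  by_cases htop : (CZDG R).egirth = ⊤
  · exact Or.inr htop
  refine Or.inl ?_
  by_contra h3
  have hacyc : ¬ (CZDG R).IsAcyclic := fun h => htop h.egirth_eq_top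
  obtain ⟨v, p, hp, hlen⟩ := (SimpleGraph.exists_egirth_eq_length).mpr hacyc
  have h3' : 3 ≤ p.length := hp.three_le_length
  have hne3 : p.length ≠ 3 := by
    intro h
    apply h3
    rw [hlen, h]
    norm_cast
  have hn4 : 4 ≤ p.length := by omega
  have tri : NoTri R := by
    intro x y z hx hy hz hxy hyz hxz nxy nyz nxz
    have hle := tri_egirth hx hy hz hxy hyz hxz nxy nyz nxz
    rw [hlen] at hle
    have : p.length ≤ 3 := by exact_mod_cast hle
    omega
  set n := p.length with hn
  have key : ∀ i j : ℕ, 1 ≤ i → i ≤ n → 1 ≤ j → j ≤ n → i ≠ j →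
      p.getVert i ≠ p.getVert j :=
    fun i j hi1 hi2 hj1 hj2 hij h => hij (cycle_getVert_inj hp hi1 hi2 hj1 hj2 h)
  have g0 : p.getVert 0 = v := p.getVert_zero
  have gn : p.getVert n = v := p.getVert_length
  set u2 := p.getVert 1 with hu2
  set u3 := p.getVert 2 with hu3
  set u4 := p.getVert 3 with hu4
  -- adjacencies
  have a12 : (CZDG R).Adj v u2 := by
    have h := p.adj_getVert_succ (show 0 < n by omega)
    rwa [g0] at h
  have a23 : (CZDG R).Adj u2 u3 := p.adj_getVert_succ (show 1 < n by omega)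
  have a34 : (CZDG R).Adj u3 u4 := p.adj_getVert_succ (show 2 < n by omega)
  -- distinctness
  have n12 : v ≠ u2 := by
    have h := key n 1 (by omega) le_rfl (by omega) (by omega) (by omega)
    rwa [gn] at h
  have n23 : u2 ≠ u3 := key 1 2 (by omega) (by omega) (by omega) (by omega) (by omega)
  have n34 : u3 ≠ u4 := key 2 3 (by omega) (by omega) (by omega) (by omega) (by omega)
  have n13 : v ≠ u3 := by
    have h := key n 2 (by omega) le_rfl (by omega) (by omega) (by omega)
    rwa [gn] at h
  have n24 : u2 ≠ u4 := key 1 3 (by omega) (by omega) (by omega) (by omega) (by omega)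
  -- ring elements
  set a : R := (v.out : R) with hA
  set b : R := (u2.out : R) with hB
  set c : R := (u3.out : R) with hC
  set d : R := (u4.out : R) with hD
  have ha : a ≠ 0 := v.out.2.1
  have hb : b ≠ 0 := u2.out.2.1
  have hc : c ≠ 0 := u3.out.2.1
  have hd' : d ≠ 0 := u4.out.2.1
  have hab : a * b = 0 := adj_out a12
  have hbc : b * c = 0 := adj_out a23
  have hcd : c * d = 0 := adj_out a34
  have nab : annSet R a ≠ annSet R b := ann_out_ne n12
  have nbc : annSet R b ≠ annSet R c := ann_out_ne n23
  have ncd : annSet R c ≠ annSet R d := ann_out_ne n34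
  have nac : annSet R a ≠ annSet R c := ann_out_ne n13
  have nbd : annSet R b ≠ annSet R d := ann_out_ne n24
  by_cases h4 : n = 4
  · -- four-cycle
    have a41 : (CZDG R).Adj u4 v := by
      have h := p.adj_getVert_succ (show 3 < n by omega)
      rw [show (3 : ℕ) + 1 = n by omega, gn] at h
      exact h
    have n41 : u4 ≠ v := by
      have h := key 3 n (by omega) (by omega) (by omega) le_rfl (by omega)
      rw [gn] at h
      exact h
    exact absurd (adj_out a41) (fun hda =>
      four_cycle tri a b c d ha hb hc hd' hab hbc hcd hda nab nbc ncd
        (ann_out_ne n41) nac nbd)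
  · have h5 : 5 ≤ n := by omega
    set u5 := p.getVert (n - 1) with hu5
    have a51 : (CZDG R).Adj u5 v := by
      have h := p.adj_getVert_succ (show n - 1 < n by omega)
      rw [show n - 1 + 1 = n by omega, gn] at h
      exact h
    have n51 : u5 ≠ v := by
      have h := key (n - 1) n (by omega) (by omega) (by omega) le_rfl (by omega)
      rw [gn] at h
      exact h
    have n25 : u2 ≠ u5 := key 1 (n - 1) (by omega) (by omega) (by omega) (by omega) (by omega)
    have n35 : u3 ≠ u5 := key 2 (n - 1) (by omega) (by omega) (by omega) (by omega) (by omega)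
    set e : R := (u5.out : R) with hE
    have he : e ≠ 0 := u5.out.2.1
    have hea : e * a = 0 := adj_out a51
    have nea : annSet R e ≠ annSet R a := ann_out_ne n51
    have nbe : annSet R b ≠ annSet R e := ann_out_ne n25
    have nce : annSet R c ≠ annSet R e := ann_out_ne n35
    by_cases hz0 : a * c = 0
    · exact tri a b c ha hb hc hab hbc hz0 nab nbc nac
    · have hzb : (a * c) * b = 0 := by linear_combination c * hab
      have hzd : (a * c) * d = 0 := by linear_combination a * hcd
      have hze : (a * c) * e = 0 := by linear_combination c * hea
      by_cases hz1 : annSet R (a * c) = annSet R b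
      · have hbd : b * d = 0 := by
          have hm : d ∈ annSet R (a * c) := mem_ann.mpr hzd
          rw [hz1] at hm
          exact mem_ann.mp hm
        exact tri b c d hb hc hd' hbc hcd hbd nbc ncd nbd
      by_cases hz2 : annSet R (a * c) = annSet R d
      · have hdb : d * b = 0 := by
          have hm : b ∈ annSet R (a * c) := mem_ann.mpr hzb
          rw [hz2] at hm
          exact mem_ann.mp hm
        exact tri b c d hb hc hd' hbc hcd (zc hdb) nbc ncd nbd
      by_cases hz3 : annSet R (a * c) = annSet R c
      · have hce : c * e = 0 := by
          have hm : e ∈ annSet R (a * c) := mem_ann.mpr hze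
          rw [hz3] at hm
          exact mem_ann.mp hm
        exact four_cycle tri a b c e ha hb hc he hab hbc hce hea nab nbc nce nea nac nbe
      · exact four_cycle tri (a * c) b c d hz0 hb hc hd' hzb hbc hcd (zc hzd)
          hz1 nbc ncd (fun h => hz2 h.symm) hz3 nbd
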